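/- Assume X ∈ ℝ^{n×p} has full column rank (p ≤ n) and Σ ∈ ℝ^{p×p} is symmetric positive definite. For s ≤ p, let U ∈ ℝ^{p×s} have full column rank and set Z = XU. Then s/2 + (n/2)·tr((ZᵀZ)^{-1} Uᵀ Σ U) ≤ p/2 + (n/2)·tr((XᵀX)^{-1} Σ), i.e. df_R(Z) ≤ df_R(X), and equality holds if and only if s = p. -/

import Mathlib

open Matrix
open scoped MatrixOrder

namespace DfRAux

lemma inj_of_rank {m k : ℕ} (A : Matrix (Fin m) (Fin k) ℝ) (h : A.rank = k) :
    Function.Injective A.mulVecLin := by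
  rw [← LinearMap.ker_eq_bot]
  have h1 := LinearMap.finrank_range_add_finrank_ker A.mulVecLin
  have h2 : Module.finrank ℝ (Fin k → ℝ) = k := by simp
  have h3 : Module.finrank ℝ (LinearMap.range A.mulVecLin) = k := h
  rw [h2, h3] at h1
  have h4 : Module.finrank ℝ (LinearMap.ker A.mulVecLin) = 0 := by omega
  exact Submodule.finrank_eq_zero.mp h4

lemma posDef_transpose_mul_self {m k : ℕ} (A : Matrix (Fin m) (Fin k) ℝ)
    (h : Function.Injective A.mulVecLin) : (Aᵀ * A).PosDef := by
  refine PosDef.of_dotProduct_mulVec_pos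
    (by simpa [conjTranspose_eq_transpose_of_trivial] using isHermitian_conjTranspose_mul_self A)
    fun x hx => ?_
  have hAx : A *ᵥ x ≠ 0 := by
    intro h0
    exact hx (h (show A.mulVecLin x = A.mulVecLin 0 by
      simpa [mulVecLin_apply] using h0))
  have e : star x ⬝ᵥ (Aᵀ * A) *ᵥ x = (A *ᵥ x) ⬝ᵥ (A *ᵥ x) := by
    rw [star_trivial, ← mulVec_mulVec, dotProduct_mulVec, vecMul_transpose]
  rw [e]
  have h0 : (0:ℝ) ≤ (A *ᵥ x) ⬝ᵥ (A *ᵥ x) :=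
    Finset.sum_nonneg fun i _ => mul_self_nonneg _
  rcases h0.lt_or_eq with hlt | heq
  · exact hlt
  · exact absurd (dotProduct_self_eq_zero.mp heq.symm) hAx

lemma trace_nonneg_of_posSemidef {k : ℕ} {M : Matrix (Fin k) (Fin k) ℝ}
    (hM : M.PosSemidef) : 0 ≤ M.trace := by
  have hd : ∀ i, 0 ≤ M i i := fun i => by
    have := hM.dotProduct_mulVec_nonneg (Pi.single i 1)
    simpa [dotProduct, mulVec, Pi.single_apply, Finset.sum_ite_eq,
      mul_ite, ite_mul] using this
  exact Finset.sum_nonneg fun i _ => hd i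

lemma trace_mul_nonneg {k : ℕ} {Q M : Matrix (Fin k) (Fin k) ℝ}
    (hQ : Q.PosSemidef) (hM : M.PosSemidef) : 0 ≤ (Q * M).trace := by
  obtain ⟨t, htpsd, hts⟩ : ∃ t : Matrix (Fin k) (Fin k) ℝ, t.PosSemidef ∧ t * t = M :=
    ⟨CFC.sqrt M, nonneg_iff_posSemidef.mp (CFC.sqrt_nonneg M),
      CFC.sqrt_mul_sqrt_self M (nonneg_iff_posSemidef.mpr hM)⟩
  subst hts
  have htherm : tᴴ = t := htpsd.isHermitian
  have hpsd : (tᴴ * Q * t).PosSemidef := hQ.conjTranspose_mul_mul_same t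
  rw [htherm] at hpsd
  have e : (Q * (t * t)).trace = (t * Q * t).trace := by
    rw [← Matrix.mul_assoc, trace_mul_comm, ← Matrix.mul_assoc]
  rw [e]
  exact trace_nonneg_of_posSemidef hpsd

lemma trace_proj_le {q s : ℕ} (W : Matrix (Fin q) (Fin s) ℝ) (hW : (Wᵀ * W).PosDef)
    {M : Matrix (Fin q) (Fin q) ℝ} (hM : M.PosSemidef) :
    ((Wᵀ * W)⁻¹ * (Wᵀ * M * W)).trace ≤ M.trace := by
  set B := Wᵀ * W with hB
  have hBdet : IsUnit B.det := hW.isUnit.map detMonoidHom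
  have e1 : B⁻¹ * B = 1 := nonsing_inv_mul B hBdet
  have e2 : B * B⁻¹ = 1 := mul_nonsing_inv B hBdet
  set P := W * B⁻¹ * Wᵀ with hP
  have hPP : P * P = P := by
    rw [hP]
    calc W * B⁻¹ * Wᵀ * (W * B⁻¹ * Wᵀ)
        = W * B⁻¹ * (Wᵀ * W) * (B⁻¹ * Wᵀ) := by
          simp only [Matrix.mul_assoc]
      _ = W * ((B⁻¹ * B) * (B⁻¹ * Wᵀ)) := by
          rw [← hB]; simp only [Matrix.mul_assoc]
      _ = W * B⁻¹ * Wᵀ := by rw [e1, Matrix.one_mul, Matrix.mul_assoc]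
  have hBt : Bᵀ = B := by
    have := isHermitian_conjTranspose_mul_self W
    simp only [conjTranspose_eq_transpose_of_trivial] at this
    exact this
  have hPt : Pᵀ = P := by
    rw [hP, transpose_mul, transpose_mul, transpose_transpose,
      transpose_nonsing_inv, hBt, Matrix.mul_assoc]
  set Q := (1 : Matrix (Fin q) (Fin q) ℝ) - P with hQ
  have hQt : Qᵀ = Q := by rw [hQ, transpose_sub, transpose_one, hPt]
  have hQQ : Q * Q = Q := by
    rw [hQ]
    simp only [Matrix.sub_mul, Matrix.mul_sub, Matrix.one_mul, Matrix.mul_one, hPP]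
    abel
  have hQpsd : Q.PosSemidef := by
    have := posSemidef_conjTranspose_mul_self Q
    rwa [conjTranspose_eq_transpose_of_trivial, hQt, hQQ] at this
  have htr : (B⁻¹ * (Wᵀ * M * W)).trace = (P * M).trace := by
    rw [hP]
    calc (B⁻¹ * (Wᵀ * M * W)).trace
        = ((B⁻¹ * Wᵀ * M) * W).trace := by simp only [Matrix.mul_assoc]
      _ = (W * (B⁻¹ * Wᵀ * M)).trace := trace_mul_comm _ _
      _ = (W * B⁻¹ * Wᵀ * M).trace := by simp only [Matrix.mul_assoc]
  have hsplit : (Q * M).trace = M.trace - (P * M).trace := by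
    rw [hQ, Matrix.sub_mul, Matrix.one_mul, trace_sub]
  have hpos := trace_mul_nonneg hQpsd hM
  rw [hsplit] at hpos
  rw [htr]
  linarith

end DfRAux

/-- For a full-column-rank design `X` and a full-column-rank coefficient
matrix `U`, the predictive model degrees of freedom of the ordinary least squares model
on `Z = XU` is at most that of `X`, with equality iff `s = p`. -/
theorem dfR_linear_combination_le
    {n p s : ℕ} (hpn : p ≤ n) (hsp : s ≤ p)
    (X : Matrix (Fin n) (Fin p) ℝ) (hX : X.rank = p)
    (Sig : Matrix (Fin p) (Fin p) ℝ) (hSig : Sig.IsSymm) (hSigpd : Sig.PosDef)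
    (U : Matrix (Fin p) (Fin s) ℝ) (hU : U.rank = s) :
    ((s : ℝ) / 2 + ((n : ℝ) / 2) *
        ((((X * U)ᵀ * (X * U))⁻¹ * (Uᵀ * Sig * U)).trace) ≤
      (p : ℝ) / 2 + ((n : ℝ) / 2) * (((Xᵀ * X)⁻¹ * Sig).trace)) ∧
    ((s : ℝ) / 2 + ((n : ℝ) / 2) *
        ((((X * U)ᵀ * (X * U))⁻¹ * (Uᵀ * Sig * U)).trace) =
      (p : ℝ) / 2 + ((n : ℝ) / 2) * (((Xᵀ * X)⁻¹ * Sig).trace) ↔ s = p) := by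
  classical
  have hXinj : Function.Injective X.mulVecLin := DfRAux.inj_of_rank X hX
  have hUinj : Function.Injective U.mulVecLin := DfRAux.inj_of_rank U hU
  have hXUinj : Function.Injective (X * U).mulVecLin := by
    rw [Matrix.mulVecLin_mul]
    exact hXinj.comp hUinj
  have hA : (Xᵀ * X).PosDef := DfRAux.posDef_transpose_mul_self X hXinj
  -- the key trace inequality
  have key : (((X * U)ᵀ * (X * U))⁻¹ * (Uᵀ * Sig * U)).trace ≤
      ((Xᵀ * X)⁻¹ * Sig).trace := by
    set S := CFC.sqrt (Xᵀ * X) with hSdef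
    have hSS : S * S = Xᵀ * X :=
      CFC.sqrt_mul_sqrt_self _ (nonneg_iff_posSemidef.mpr hA.posSemidef)
    have hSt : Sᵀ = S := by
      rw [← conjTranspose_eq_transpose_of_trivial]
      exact (nonneg_iff_posSemidef.mp (CFC.sqrt_nonneg (Xᵀ * X))).isHermitian
    have hSdet : IsUnit S.det := by
      rw [isUnit_iff_ne_zero]
      intro h0
      have : (Xᵀ * X).det = 0 := by rw [← hSS, det_mul, h0, mul_zero]
      exact (hA.det_pos.ne' this)
    have eS1 : S⁻¹ * S = 1 := nonsing_inv_mul S hSdet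
    have eS2 : S * S⁻¹ = 1 := mul_nonsing_inv S hSdet
    have hSit : (S⁻¹)ᵀ = S⁻¹ := by rw [transpose_nonsing_inv, hSt]
    have hMpsd : (S⁻¹ * Sig * S⁻¹).PosSemidef := by
      have := hSigpd.posSemidef.conjTranspose_mul_mul_same S⁻¹
      rwa [conjTranspose_eq_transpose_of_trivial, hSit] at this
    have hWtW : (S * U)ᵀ * (S * U) = (X * U)ᵀ * (X * U) := by
      rw [transpose_mul, transpose_mul, hSt, Matrix.mul_assoc, Matrix.mul_assoc,
        ← Matrix.mul_assoc S S U, hSS, ← Matrix.mul_assoc Xᵀ X U]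
    have hWpd : ((S * U)ᵀ * (S * U)).PosDef := by
      rw [hWtW]
      exact DfRAux.posDef_transpose_mul_self (X * U) hXUinj
    have hWMW : (S * U)ᵀ * (S⁻¹ * Sig * S⁻¹) * (S * U) = Uᵀ * Sig * U := by
      rw [transpose_mul, hSt]
      simp only [Matrix.mul_assoc]
      rw [← Matrix.mul_assoc S⁻¹ S U, eS1, Matrix.one_mul,
        ← Matrix.mul_assoc S S⁻¹ (Sig * U), eS2, Matrix.one_mul]
    have htX : ((Xᵀ * X)⁻¹ * Sig).trace = (S⁻¹ * Sig * S⁻¹).trace := by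
      rw [show Xᵀ * X = S * S from hSS.symm, Matrix.mul_inv_rev,
        Matrix.mul_assoc, trace_mul_comm, Matrix.mul_assoc]
    calc (((X * U)ᵀ * (X * U))⁻¹ * (Uᵀ * Sig * U)).trace
        = (((S * U)ᵀ * (S * U))⁻¹ *
            ((S * U)ᵀ * (S⁻¹ * Sig * S⁻¹) * (S * U))).trace := by
          rw [hWtW, hWMW]
      _ ≤ (S⁻¹ * Sig * S⁻¹).trace := DfRAux.trace_proj_le (S * U) hWpd hMpsd
      _ = ((Xᵀ * X)⁻¹ * Sig).trace := htX.symm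
  have hn2 : (0:ℝ) ≤ (n:ℝ) / 2 := by positivity
  have hmul := mul_le_mul_of_nonneg_left key hn2
  have hsp' : (s:ℝ) ≤ (p:ℝ) := Nat.cast_le.mpr hsp
  refine ⟨by linarith, ?_, ?_⟩
  · intro heq
    by_contra hne
    have hslt : (s:ℝ) < (p:ℝ) := Nat.cast_lt.mpr (lt_of_le_of_ne hsp hne)
    linarith
  · intro heq
    subst heq
    have hUisU : IsUnit U := by
      rw [← Matrix.mulVec_injective_iff_isUnit]
      intro x y hxy
      exact hUinj (show U.mulVecLin x = U.mulVecLin y by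
        simpa [mulVecLin_apply] using hxy)
    have hUdet : IsUnit U.det := (Matrix.isUnit_iff_isUnit_det U).mp hUisU
    have hUtdet : IsUnit (Uᵀ).det := by rwa [det_transpose]
    have htr : (((X * U)ᵀ * (X * U))⁻¹ * (Uᵀ * Sig * U)).trace =
        ((Xᵀ * X)⁻¹ * Sig).trace := by
      have h1 : (X * U)ᵀ * (X * U) = (Uᵀ * (Xᵀ * X)) * U := by
        rw [transpose_mul]
        simp only [Matrix.mul_assoc]
      rw [h1, Matrix.mul_inv_rev, Matrix.mul_inv_rev]
      simp only [Matrix.mul_assoc]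
      rw [← Matrix.mul_assoc (Uᵀ)⁻¹ Uᵀ (Sig * U), nonsing_inv_mul Uᵀ hUtdet,
        Matrix.one_mul, trace_mul_comm]
      simp only [Matrix.mul_assoc]
      rw [mul_nonsing_inv U hUdet, Matrix.mul_one]
    rw [htr]
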